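/- There exists an unbounded tower of cardinality 𝔱 if and only if 𝔱 = 𝔟. -/

import Mathlib

/-- `A ⊆* B`: `A \ B` is finite. -/
def AlmostSubset (A B : Set ℕ) : Prop := (A \ B).Finite

/-- `f ≤* g`: eventual domination. -/
def EventuallyLE (f g : ℕ → ℕ) : Prop := ∀ᶠ n in Filter.atTop, f n ≤ g n

/-- A family of functions is unbounded w.r.t. `≤*`. -/
def UnboundedFam (B : Set (ℕ → ℕ)) : Prop := ¬ ∃ g : ℕ → ℕ, ∀ f ∈ B, EventuallyLE f g

/-- The bounding number `𝔟`. -/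
noncomputable def bNumber : Cardinal :=
  sInf { c | ∃ B : Set (ℕ → ℕ), UnboundedFam B ∧ Cardinal.mk B = c }

/-- `A` is an (infinite) pseudointersection of the family `F`. -/
def Pseudointersection (A : Set ℕ) (F : Set (Set ℕ)) : Prop :=
  A.Infinite ∧ ∀ B ∈ F, (A \ B).Finite

/-- The pseudointersection number `𝔭`. -/
noncomputable def pNumber : Cardinal :=
  sInf { c | ∃ F : Set (Set ℕ), (∀ B ∈ F, B.Infinite) ∧
    (∀ B ∈ F, ∀ C ∈ F, B ∩ C ∈ F) ∧ (¬ ∃ A, Pseudointersection A F) ∧ Cardinal.mk F = c }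

/-- A tower: a set of infinite subsets of ℕ which can be enumerated along a
well-order so as to be `⊆*`-decreasing. -/
def IsTower (T : Set (Set ℕ)) : Prop :=
  (∀ x ∈ T, x.Infinite) ∧
  ∃ (I : Type) (r : I → I → Prop), IsWellOrder I r ∧
    ∃ e : I ≃ T, ∀ i j : I, r i j → AlmostSubset (e j).1 (e i).1

/-- The tower number `𝔱`. -/
noncomputable def tNumber : Cardinal :=
  sInf { c | ∃ T : Set (Set ℕ), IsTower T ∧ (¬ ∃ A, Pseudointersection A T) ∧ Cardinal.mk T = c }

/-- The increasing enumeration of a subset of ℕ. -/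
noncomputable def enumOf (x : Set ℕ) : ℕ → ℕ := Nat.nth (· ∈ x)

/-- An unbounded tower: the increasing enumerations form a `≤*`-unbounded family. -/
def UnboundedTower (T : Set (Set ℕ)) : Prop := IsTower T ∧ UnboundedFam (enumOf '' T)


open Classical in
/-- count comparison for almost-subsets -/
lemma count_le_count_add_card {A B : Set ℕ} (h : (A \ B).Finite) (m : ℕ) :
    Nat.count (· ∈ A) m ≤ Nat.count (· ∈ B) m + h.toFinset.card := by
  classical
  rw [Nat.count_eq_card_filter_range, Nat.count_eq_card_filter_range]
  have hsub : (Finset.range m).filter (· ∈ A) ⊆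
      ((Finset.range m).filter (· ∈ B)) ∪ h.toFinset := by
    intro a ha
    simp only [Finset.mem_filter, Finset.mem_range] at ha
    by_cases hb : a ∈ B
    · exact Finset.mem_union_left _ (Finset.mem_filter.2 ⟨Finset.mem_range.2 ha.1, hb⟩)
    · exact Finset.mem_union_right _ (h.mem_toFinset.2 ⟨ha.2, hb⟩)
  calc ((Finset.range m).filter (· ∈ A)).card ≤ _ := Finset.card_le_card hsub
    _ ≤ _ := Finset.card_union_le _ _

open Classical in
lemma count_mono_set {A B : Set ℕ} (h : A ⊆ B) (m : ℕ) :
    Nat.count (· ∈ A) m ≤ Nat.count (· ∈ B) m :=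
  Nat.count_mono_left (fun _ _ hk => h hk)

/-- shifted comparison of enumerations for almost-subsets -/
lemma nth_le_nth_add {A B : Set ℕ} (hA : A.Infinite) (hB : B.Infinite)
    (h : (A \ B).Finite) {k : ℕ} (hk : h.toFinset.card ≤ k) (n : ℕ) :
    Nat.nth (· ∈ B) n ≤ Nat.nth (· ∈ A) (n + k) := by
  classical
  set v := Nat.nth (· ∈ A) (n + k) with hv
  have h1 : Nat.count (· ∈ A) (v + 1) = n + k + 1 :=
    Nat.count_nth_succ_of_infinite (p := (· ∈ A)) hA _
  have h2 : n + k + 1 ≤ Nat.count (· ∈ B) (v + 1) + k := by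
    rw [← h1]
    exact (count_le_count_add_card h (v + 1)).trans (by omega)
  have h3 : n < Nat.count (· ∈ B) (v + 1) := by omega
  have := Nat.nth_lt_of_lt_count h3
  omega

/-- enumeration of the range of a strictly monotone function -/
lemma nth_range_strictMono {g : ℕ → ℕ} (hg : StrictMono g) (n : ℕ) :
    Nat.nth (· ∈ Set.range g) n = g n := by
  classical
  have hmem : g n ∈ Set.range g := ⟨n, rfl⟩
  have hcount : Nat.count (· ∈ Set.range g) (g n) = n := by
    rw [Nat.count_eq_card_filter_range]
    have : (Finset.range (g n)).filter (· ∈ Set.range g) = (Finset.range n).image g := by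
      ext a
      simp only [Finset.mem_filter, Finset.mem_range, Finset.mem_image, Set.mem_range]
      constructor
      · rintro ⟨hlt, m, rfl⟩
        exact ⟨m, hg.lt_iff_lt.1 hlt, rfl⟩
      · rintro ⟨m, hm, rfl⟩
        exact ⟨hg hm, m, rfl⟩
    rw [this, Finset.card_image_of_injective _ hg.injective, Finset.card_range]
  have := Nat.nth_count (p := (· ∈ Set.range g)) hmem
  rwa [hcount] at this

lemma isTower_range {ι : Type} (r : ι → ι → Prop) [IsWellOrder ι r] (x : ι → Set ℕ)
    (hinf : ∀ i, (x i).Infinite) (hdec : ∀ i j, r i j → AlmostSubset (x j) (x i))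
    (hinj : Function.Injective x) : IsTower (Set.range x) :=
  ⟨by rintro _ ⟨i, rfl⟩; exact hinf i, ι, r, inferInstance,
    Equiv.ofInjective x hinj, fun i j h => hdec i j h⟩

lemma exists_PI_of_card_lt {T : Set (Set ℕ)} (hT : IsTower T) (h : Cardinal.mk T < tNumber) :
    ∃ A, Pseudointersection A T := by
  by_contra h'
  have hmem : Cardinal.mk T ∈ { c | ∃ T : Set (Set ℕ), IsTower T ∧
      (¬ ∃ A, Pseudointersection A T) ∧ Cardinal.mk T = c } := ⟨T, hT, h', rfl⟩
  exact absurd (csInf_le' hmem) (not_le.2 h)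

/-- thinning an infinite set relative to a function -/
lemma exists_thin_subset (A : Set ℕ) (hA : A.Infinite) (f : ℕ → ℕ) :
    ∃ y : Set ℕ, y.Infinite ∧ y ⊆ A ∧ (A \ y).Infinite ∧ ∀ n, f n ≤ enumOf y n := by
  classical
  set S : ℕ → ℕ := fun n => 2 * n + (Finset.range (n + 1)).sup f with hS
  have hSmono : StrictMono S := by
    intro a b hab
    have : (Finset.range (a + 1)).sup f ≤ (Finset.range (b + 1)).sup f :=
      Finset.sup_mono (Finset.range_subset_range.2 (by omega))
    simp only [hS]; omega
  have hSge : ∀ n, f n ≤ S n := fun n => by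
    have : f n ≤ (Finset.range (n + 1)).sup f := Finset.le_sup (Finset.self_mem_range_succ n)
    simp only [hS]; omega
  set g : ℕ → ℕ := fun n => Nat.nth (· ∈ A) (S n) with hg
  have hnth := Nat.nth_strictMono hA
  have hgmono : StrictMono g := fun a b hab => hnth (hSmono hab)
  refine ⟨Set.range g, Set.infinite_range_of_injective hgmono.injective, ?_, ?_, ?_⟩
  · rintro _ ⟨n, rfl⟩; exact Nat.nth_mem_of_infinite hA _
  · -- A \ range g is infinite
    set g' : ℕ → ℕ := fun n => Nat.nth (· ∈ A) (S n + 1) with hg'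
    have hgap : ∀ n, S n + 2 ≤ S (n + 1) := fun n => by
      have : (Finset.range (n + 1)).sup f ≤ (Finset.range (n + 1 + 1)).sup f :=
        Finset.sup_mono (Finset.range_subset_range.2 (by omega))
      simp only [hS]; omega
    have hg'inj : Function.Injective g' := by
      intro a b hab
      have := Nat.nth_injective hA hab
      exact hSmono.injective (by omega)
    have hsub : Set.range g' ⊆ A \ Set.range g := by
      rintro _ ⟨n, rfl⟩
      refine ⟨Nat.nth_mem_of_infinite hA _, ?_⟩
      rintro ⟨m, hm⟩
      have heq := Nat.nth_injective hA hm
      rcases le_or_gt m n with h | h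
      · have := hSmono.monotone h; omega
      · have h1 := hSmono.monotone (show n + 1 ≤ m by omega)
        have h2 := hgap n
        omega
    exact (Set.infinite_range_of_injective hg'inj).mono hsub
  · intro n
    have : enumOf (Set.range g) n = g n := nth_range_strictMono hgmono n
    rw [this]
    have : S n ≤ Nat.nth (· ∈ A) (S n) := Nat.le_nth (fun hf => absurd hf hA)
    have := hSge n
    simp only [hg]; omega

lemma exists_tower_family {ι : Type} [LinearOrder ι] [WellFoundedLT ι]
    (hcard : ∀ i : ι, Cardinal.mk (Set.Iio i) < tNumber) (f : ι → ℕ → ℕ) :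
    ∃ x : ι → Set ℕ, (∀ i, (x i).Infinite) ∧
      (∀ j i, j < i → (x i \ x j).Finite ∧ (x j \ x i).Infinite) ∧
      (∀ i n, f i n ≤ enumOf (x i) n) := by
  classical
  have wf := (inferInstance : WellFoundedLT ι).wf
  set F : ∀ i : ι, (∀ j, j < i → Set ℕ) → Set ℕ := fun i prev =>
    if h : ∃ y : Set ℕ, y.Infinite ∧
        (∀ j (hj : j < i), (y \ prev j hj).Finite ∧ (prev j hj \ y).Infinite) ∧
        (∀ n, f i n ≤ enumOf y n)
      then h.choose else ∅ with hF
  set x : ι → Set ℕ := WellFounded.fix wf F with hx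
  have hxeq : ∀ i, x i = F i (fun j _ => x j) := fun i => WellFounded.fix_eq wf F i
  have step : ∀ i : ι, (∀ j, j < i → (x j).Infinite) →
      (∀ j k, j < k → k < i → (x k \ x j).Finite ∧ (x j \ x k).Infinite) →
      ∃ y : Set ℕ, y.Infinite ∧
        (∀ j (_ : j < i), (y \ x j).Finite ∧ (x j \ y).Infinite) ∧
        (∀ n, f i n ≤ enumOf y n) := by
    intro i ih1 ih2
    have hinj : Function.Injective (fun j : Set.Iio i => x j.1) := by
      intro j k hjk
      simp only at hjk
      by_contra hne
      have hne' : j.1 ≠ k.1 := fun h => hne (Subtype.ext h)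
      rcases hne'.lt_or_gt with h | h
      · have h2 := (ih2 j.1 k.1 h k.2).2
        rw [hjk, Set.diff_self] at h2
        exact h2 Set.finite_empty
      · have h2 := (ih2 k.1 j.1 h j.2).2
        rw [← hjk, Set.diff_self] at h2
        exact h2 Set.finite_empty
    have htower : IsTower (Set.range (fun j : Set.Iio i => x j.1)) := by
      haveI : IsWellOrder (Set.Iio i) (· < ·) := isWellOrder_lt
      refine isTower_range (· < ·) _ (fun j => ih1 j.1 j.2) ?_ hinj
      intro j k hjk
      exact (ih2 j.1 k.1 hjk k.2).1
    have hsmall : Cardinal.mk (Set.range (fun j : Set.Iio i => x j.1)) < tNumber :=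
      lt_of_le_of_lt Cardinal.mk_range_le (hcard i)
    obtain ⟨A, hAinf, hAsub⟩ := exists_PI_of_card_lt htower hsmall
    obtain ⟨y, hyinf, hysub, hAy, hyenum⟩ := exists_thin_subset A hAinf (f i)
    refine ⟨y, hyinf, fun j hj => ⟨?_, ?_⟩, hyenum⟩
    · have hAxj : (A \ x j).Finite := hAsub (x j) ⟨⟨j, hj⟩, rfl⟩
      exact hAxj.subset (fun a ha => ⟨hysub ha.1, ha.2⟩)
    · have hAxj : (A \ x j).Finite := hAsub (x j) ⟨⟨j, hj⟩, rfl⟩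
      have : ((A \ y) \ (A \ x j)).Infinite := hAy.diff hAxj
      refine this.mono ?_
      rintro a ⟨⟨haA, hay⟩, ha2⟩
      simp only [Set.mem_diff, not_and, not_not] at ha2
      exact ⟨ha2 haA, hay⟩
  have good : ∀ i : ι, (x i).Infinite ∧
      (∀ j (_ : j < i), (x i \ x j).Finite ∧ (x j \ x i).Infinite) ∧
      (∀ n, f i n ≤ enumOf (x i) n) := by
    intro i
    induction i using wf.induction with
    | _ i ih =>
      have hex := step i (fun j hj => (ih j hj).1)
        (fun j k hjk hki => (ih k hki).2.1 j hjk)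
      have : x i = F i (fun j _ => x j) := hxeq i
      rw [hF] at this
      simp only [hex, dif_pos] at this
      rw [this]
      exact hex.choose_spec
  exact ⟨x, fun i => (good i).1, fun j i hj => (good i).2.1 j hj, fun i => (good i).2.2⟩

lemma injective_of_strictDiff {ι : Type} [LinearOrder ι] {x : ι → Set ℕ}
    (h : ∀ j i, j < i → (x j \ x i).Infinite) : Function.Injective x := by
  intro a b hab
  by_contra hne
  rcases lt_or_gt_of_ne hne with hl | hl
  · have h2 := h a b hl; rw [hab, Set.diff_self] at h2; exact h2 Set.finite_empty
  · have h2 := h b a hl; rw [hab, Set.diff_self] at h2; exact h2 Set.finite_empty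

lemma unboundedFam_univ : UnboundedFam (Set.univ : Set (ℕ → ℕ)) := by
  rintro ⟨g, hg⟩
  have h1 := hg (fun n => g n + 1) (Set.mem_univ _)
  rw [EventuallyLE, Filter.eventually_atTop] at h1
  obtain ⟨N, hN⟩ := h1
  exact absurd (hN N le_rfl) (by omega)

lemma t_le_b : tNumber ≤ bNumber := by
  refine le_csInf ⟨Cardinal.mk (Set.univ : Set (ℕ → ℕ)), Set.univ, unboundedFam_univ, rfl⟩ ?_
  rintro c ⟨B, hB, rfl⟩
  by_contra hlt
  rw [not_le] at hlt
  apply hB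
  set ι := (Cardinal.mk B).ord.ToType with hι
  haveI : IsWellOrder ι (· < ·) := isWellOrder_lt
  have hcards : ∀ i : ι, Cardinal.mk (Set.Iio i) < tNumber :=
    fun i => (Cardinal.mk_Iio_ord_toType i).trans hlt
  have hιB : Cardinal.mk ι = Cardinal.mk B := Cardinal.mk_ord_toType _
  obtain ⟨e⟩ := Cardinal.eq.1 hιB
  obtain ⟨x, hinf, hcond, henum⟩ := exists_tower_family hcards
    (fun i n => (Finset.range (2 * n + 1)).sup (e i).1)
  have hinj : Function.Injective x := injective_of_strictDiff (fun j i hj => (hcond j i hj).2)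
  have htower : IsTower (Set.range x) :=
    isTower_range (· < ·) x hinf (fun i j hij => (hcond i j hij).1) hinj
  have hsmall : Cardinal.mk (Set.range x) < tNumber :=
    lt_of_le_of_lt Cardinal.mk_range_le (hιB ▸ hlt)
  obtain ⟨A, hAinf, hAsub⟩ := exists_PI_of_card_lt htower hsmall
  refine ⟨enumOf A, fun fb hfb => ?_⟩
  set i := e.symm ⟨fb, hfb⟩ with hi
  have hei : ((e i : B) : ℕ → ℕ) = fb := by rw [hi, Equiv.apply_symm_apply]
  have hAxi : (A \ x i).Finite := hAsub (x i) ⟨i, rfl⟩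
  set k := hAxi.toFinset.card with hk
  rw [EventuallyLE, Filter.eventually_atTop]
  refine ⟨2 * k, fun n hn => ?_⟩
  set m := n - k with hm
  have hmk : m + k = n := by omega
  have step1 : fb n ≤ (Finset.range (2 * m + 1)).sup (e i).1 := by
    rw [hei]
    exact Finset.le_sup (Finset.mem_range.2 (by omega))
  have step2 : (Finset.range (2 * m + 1)).sup (e i).1 ≤ enumOf (x i) m := henum i m
  have step3 : Nat.nth (· ∈ x i) m ≤ Nat.nth (· ∈ A) (m + k) :=
    nth_le_nth_add hAinf (hinf i) hAxi le_rfl m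
  rw [hmk] at step3
  exact step1.trans (step2.trans step3)

lemma exists_unbounded_tower (h : tNumber = bNumber) :
    ∃ T : Set (Set ℕ), UnboundedTower T ∧ Cardinal.mk T = tNumber := by
  have hne : { c | ∃ B : Set (ℕ → ℕ), UnboundedFam B ∧ Cardinal.mk B = c }.Nonempty :=
    ⟨_, Set.univ, unboundedFam_univ, rfl⟩
  obtain ⟨B, hBu, hBc⟩ := csInf_mem hne
  set ι := tNumber.ord.ToType with hι
  haveI : IsWellOrder ι (· < ·) := isWellOrder_lt
  have hcards : ∀ i : ι, Cardinal.mk (Set.Iio i) < tNumber :=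
    fun i => Cardinal.mk_Iio_ord_toType i
  have hιB : Cardinal.mk ι = Cardinal.mk B := by
    rw [hι, Cardinal.mk_ord_toType, h]
    exact hBc.symm
  obtain ⟨e⟩ := Cardinal.eq.1 hιB
  obtain ⟨x, hinf, hcond, henum⟩ := exists_tower_family hcards (fun i => (e i).1)
  have hinj : Function.Injective x := injective_of_strictDiff (fun j i hj => (hcond j i hj).2)
  refine ⟨Set.range x,
    ⟨isTower_range (· < ·) x hinf (fun i j hij => (hcond i j hij).1) hinj, ?_⟩, ?_⟩
  · rintro ⟨g, hg⟩
    apply hBu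
    refine ⟨g, fun fb hfb => ?_⟩
    set i := e.symm ⟨fb, hfb⟩ with hi
    have hei : ((e i : B) : ℕ → ℕ) = fb := by rw [hi, Equiv.apply_symm_apply]
    have h1 : ∀ n, fb n ≤ enumOf (x i) n := fun n => by
      have := henum i n; rwa [hei] at this
    have h2 : EventuallyLE (enumOf (x i)) g := hg _ ⟨x i, ⟨i, rfl⟩, rfl⟩
    exact h2.mono (fun n hn => le_trans (h1 n) hn)
  · rw [Cardinal.mk_range_eq x hinj]
    exact hιB.trans (hBc.trans h.symm)


/-- There is an unbounded tower of cardinality `𝔱` iff `𝔱 = 𝔟`. -/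
theorem unbounded_tower_iff_t_eq_b :
    (∃ T : Set (Set ℕ), UnboundedTower T ∧ Cardinal.mk T = tNumber) ↔ tNumber = bNumber := by
  constructor
  · rintro ⟨T, ⟨hTower, hUnb⟩, hcard⟩
    refine le_antisymm t_le_b ?_
    calc bNumber ≤ Cardinal.mk (enumOf '' T) := csInf_le' ⟨enumOf '' T, hUnb, rfl⟩
      _ ≤ Cardinal.mk T := Cardinal.mk_image_le
      _ = tNumber := hcard
  · exact exists_unbounded_tower
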